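/- Let ℓ be a prime, F a cyclic number field of degree ℓ, p a prime totally ramified in F with unique prime 𝔭 above p, and suppose λ, μ ∈ O_F^× satisfy λ + μ = 1. If b ∈ ℤ satisfies λ ≡ b (mod 𝔭), then b^{2ℓ} ≡ 1 (mod p) and (b − 1)^{2ℓ} ≡ 1 (mod p). -/

import Mathlib

open NumberField

-- auxiliary: for a unit u congruent to c mod P, p ∣ c^(2ℓ) - 1
theorem aux_unit_norm (ℓ : ℕ) (F : Type*) [Field F] [NumberField F] [IsGalois ℚ F]
    (hdeg : Module.finrank ℚ F = ℓ)
    (p : ℕ) (hp : p.Prime)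
    (P : Ideal (𝓞 F)) (hP : P.IsPrime) (hpP : (p : 𝓞 F) ∈ P)
    (huniq : ∀ Q : Ideal (𝓞 F), Q.IsPrime → (p : 𝓞 F) ∈ Q → Q ≠ ⊥ → Q = P)
    (u : (𝓞 F)ˣ) (c : ℤ) (hc : (u : 𝓞 F) - (c : 𝓞 F) ∈ P) :
    (p : ℤ) ∣ c ^ (2 * ℓ) - 1 := by
  classical
  set n : ℤ := Algebra.intNorm ℤ (𝓞 F) (u : 𝓞 F) with hn
  have hunit : IsUnit n := u.isUnit.map (Algebra.intNorm ℤ (𝓞 F))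
  have hn2 : n ^ 2 = 1 := by
    rcases Int.isUnit_iff.mp hunit with h | h <;> rw [h] <;> norm_num
  -- product formula
  have hprod : algebraMap ℤ (𝓞 F) n = ∏ σ : F ≃ₐ[ℚ] F, galRestrict ℤ ℚ F (𝓞 F) σ (u : 𝓞 F) := by
    rw [prod_galRestrict_eq_norm ℤ ℚ F (𝓞 F)]
    congr 1
    apply IsFractionRing.injective ℤ ℚ
    rw [IsIntegralClosure.algebraMap_mk']
    exact Algebra.algebraMap_intNorm (A := ℤ) (K := ℚ) (L := F) (B := 𝓞 F) _
  have hPbot : P ≠ ⊥ := by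
    intro h
    rw [h] at hpP
    simp only [Ideal.mem_bot] at hpP
    exact_mod_cast hp.ne_zero (by exact_mod_cast hpP)
  -- each conjugate is congruent to c mod P
  have key : ∀ σ : F ≃ₐ[ℚ] F,
      galRestrict ℤ ℚ F (𝓞 F) σ (u : 𝓞 F) - (c : 𝓞 F) ∈ P := by
    intro σ
    set τ := galRestrict ℤ ℚ F (𝓞 F) σ
    have hτc : τ ((u : 𝓞 F) - (c : 𝓞 F)) = τ (u : 𝓞 F) - (c : 𝓞 F) := by
      rw [map_sub, map_intCast]
    have hQmem : τ ((u : 𝓞 F) - (c : 𝓞 F)) ∈ Ideal.map (τ : 𝓞 F →+* 𝓞 F) P :=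
      Ideal.mem_map_of_mem _ hc
    have hQprime : (Ideal.map (τ : 𝓞 F →+* 𝓞 F) P).IsPrime :=
      Ideal.map_isPrime_of_equiv τ.toRingEquiv
    have hpQ : (p : 𝓞 F) ∈ Ideal.map (τ : 𝓞 F →+* 𝓞 F) P := by
      have : (τ : 𝓞 F →+* 𝓞 F) (p : 𝓞 F) = (p : 𝓞 F) := by simp
      rw [← this]; exact Ideal.mem_map_of_mem _ hpP
    have hQbot : Ideal.map (τ : 𝓞 F →+* 𝓞 F) P ≠ ⊥ := by
      intro h
      exact hPbot ((Ideal.map_eq_bot_iff_of_injective τ.toRingEquiv.injective).mp h)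
    have hQ := huniq _ hQprime hpQ hQbot
    rw [hQ] at hQmem
    rwa [hτc] at hQmem
  -- quotient computation
  have hcard : Fintype.card (F ≃ₐ[ℚ] F) = ℓ := by
    rw [← Nat.card_eq_fintype_card, IsGalois.card_aut_eq_finrank, hdeg]
  have hmem : algebraMap ℤ (𝓞 F) (n - c ^ ℓ) ∈ P := by
    have h1 : ∀ σ : F ≃ₐ[ℚ] F,
        Ideal.Quotient.mk P (galRestrict ℤ ℚ F (𝓞 F) σ (u : 𝓞 F)) =
          Ideal.Quotient.mk P (c : 𝓞 F) := fun σ => Ideal.Quotient.eq.mpr (key σ)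
    have h2 : Ideal.Quotient.mk P (algebraMap ℤ (𝓞 F) n) =
        Ideal.Quotient.mk P ((c : 𝓞 F) ^ ℓ) := by
      rw [hprod, map_prod]
      simp only [h1]
      rw [Finset.prod_const, Finset.card_univ, hcard, map_pow]
    have h3 : algebraMap ℤ (𝓞 F) n - (c : 𝓞 F) ^ ℓ ∈ P := Ideal.Quotient.eq.mp h2
    have : algebraMap ℤ (𝓞 F) (n - c ^ ℓ) = algebraMap ℤ (𝓞 F) n - (c : 𝓞 F) ^ ℓ := by
      push_cast [map_sub, map_pow]
      simp
    rwa [this]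
  -- comap P = span p
  have hmax : (Ideal.span {(p : ℤ)}).IsMaximal :=
    PrincipalIdealRing.isMaximal_of_irreducible (Nat.prime_iff_prime_int.mp hp).irreducible
  have hle : Ideal.span {(p : ℤ)} ≤ Ideal.comap (algebraMap ℤ (𝓞 F)) P := by
    rw [Ideal.span_le]
    intro x hx
    simp only [Set.mem_singleton_iff] at hx
    subst hx
    simp only [SetLike.mem_coe, Ideal.mem_comap]
    simpa using hpP
  haveI := hP
  have hcomap : Ideal.comap (algebraMap ℤ (𝓞 F)) P = Ideal.span {(p : ℤ)} := by
    have hpr : (Ideal.comap (algebraMap ℤ (𝓞 F)) P).IsPrime := Ideal.IsPrime.comap _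
    exact (hmax.eq_of_le hpr.ne_top hle).symm
  have hdvd : (p : ℤ) ∣ n - c ^ ℓ := by
    rw [← Ideal.mem_span_singleton, ← hcomap]
    exact hmem
  -- conclude
  have e : c ^ (2 * ℓ) - 1 = (c ^ ℓ - n) * (c ^ ℓ + n) := by
    have h2l : c ^ (2 * ℓ) = (c ^ ℓ) ^ 2 := by rw [two_mul, pow_add, sq]
    rw [h2l, ← hn2]; ring
  have hdvd' : (p : ℤ) ∣ c ^ ℓ - n := by
    rw [← neg_sub]; exact dvd_neg.mpr hdvd
  rw [e]
  exact hdvd'.mul_right _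

theorem unit_eq_stmt16 (ℓ : ℕ) (hℓ : ℓ.Prime)
    (F : Type*) [Field F] [NumberField F] [IsGalois ℚ F]
    (hcyc : IsCyclic (F ≃ₐ[ℚ] F)) (hdeg : Module.finrank ℚ F = ℓ)
    (p : ℕ) (hp : p.Prime)
    (P : Ideal (𝓞 F)) (hP : P.IsPrime) (hpP : (p : 𝓞 F) ∈ P)
    (htot : Ideal.ramificationIdx' (Ideal.span {(p : ℤ)}) P = ℓ)
    (huniq : ∀ Q : Ideal (𝓞 F), Q.IsPrime → (p : 𝓞 F) ∈ Q → Q ≠ ⊥ → Q = P)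
    (lam mu : (𝓞 F)ˣ) (hsum : (lam : 𝓞 F) + (mu : 𝓞 F) = 1) (b : ℤ) (hb : (lam : 𝓞 F) - (b : 𝓞 F) ∈ P) :
    (p : ℤ) ∣ b ^ (2 * ℓ) - 1 ∧ (p : ℤ) ∣ (b - 1) ^ (2 * ℓ) - 1 := by
  have h1 := aux_unit_norm ℓ F hdeg p hp P hP hpP huniq lam b hb
  have hbmu : (mu : 𝓞 F) - ((1 - b : ℤ) : 𝓞 F) ∈ P := by
    have heq : (mu : 𝓞 F) - ((1 - b : ℤ) : 𝓞 F) = -((lam : 𝓞 F) - (b : 𝓞 F)) := by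
      push_cast
      linear_combination hsum
    rw [heq]
    exact neg_mem hb
  have h2 := aux_unit_norm ℓ F hdeg p hp P hP hpP huniq mu (1 - b) hbmu
  refine ⟨h1, ?_⟩
  have hpow : (b - 1) ^ (2 * ℓ) = (1 - b) ^ (2 * ℓ) := by
    rw [← neg_sub (1 : ℤ) b, Even.neg_pow ⟨ℓ, two_mul ℓ⟩]
  rwa [hpow]
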